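/- Let I ⊂ ℤ[λ₁, λ₂, γ] be the ideal (2γ, γ² + λ₁γ, 24λ₁² − 48λ₂, 24λ₁λ₂), and grade ℤ[λ₁, λ₂, γ] with deg λ₁ = deg γ = 1 and deg λ₂ = 2. Then for a homogeneous polynomial f of degree 3, the product (γ − λ₁)·f lies in I if and only if f is congruent modulo I to one of the four polynomials 0, γλ₁², γλ₂, γ(λ₁² + λ₂). In particular, γλ₁², γλ₂ and γ(λ₁² + λ₂) are the only nonzero degree-3 elements of ℤ[λ₁, λ₂, γ]/I annihilated by γ − λ₁, and they are pairwise distinct and nonzero in the quotient. -/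

import Mathlib

open MvPolynomial Finsupp

private theorem fs_eq_iff (a b : Fin 3 →₀ ℕ) : a = b ↔ (a 0 = b 0 ∧ a 1 = b 1 ∧ a 2 = b 2) := by
  constructor
  · rintro rfl; exact ⟨rfl, rfl, rfl⟩
  · rintro ⟨h0, h1, h2⟩; ext i; fin_cases i <;> assumption

private theorem aux_mem_dvd (I : Ideal (MvPolynomial (Fin 3) ℤ))
    (hI : I = Ideal.span {2 * X 2, (X 2) ^ 2 + X 0 * X 2,
      24 * (X 0) ^ 2 - 48 * X 1, 24 * X 0 * X 1}) {g : MvPolynomial (Fin 3) ℤ} (hg : g ∈ I) :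
    (24 ∣ coeff (Finsupp.single 0 4) g) ∧
    (24 ∣ coeff (Finsupp.single 0 2 + Finsupp.single 1 1) g) ∧
    (2 ∣ coeff (Finsupp.single 1 1 + Finsupp.single 2 1) g) ∧
    (2 ∣ coeff (Finsupp.single 0 2 + Finsupp.single 2 1) g
        + coeff (Finsupp.single 0 1 + Finsupp.single 2 2) g
        + coeff (Finsupp.single 2 3) g) := by
  subst hI
  rw [show ({2 * X 2, (X 2) ^ 2 + X 0 * X 2, 24 * (X 0) ^ 2 - 48 * X 1, 24 * X 0 * X 1} :
      Set (MvPolynomial (Fin 3) ℤ)) = insert (2 * X 2) (insert ((X 2) ^ 2 + X 0 * X 2)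
      (insert (24 * (X 0) ^ 2 - 48 * X 1) {24 * X 0 * X 1})) from rfl,
    Ideal.mem_span_insert] at hg
  obtain ⟨p, z1, hz1, rfl⟩ := hg
  rw [Ideal.mem_span_insert] at hz1
  obtain ⟨q, z2, hz2, rfl⟩ := hz1
  rw [Ideal.mem_span_insert] at hz2
  obtain ⟨r, z3, hz3, rfl⟩ := hz2
  rw [Ideal.mem_span_singleton] at hz3
  obtain ⟨s, rfl⟩ := hz3
  rw [show p * (2 * X 2) + (q * ((X 2) ^ 2 + X 0 * X 2) + (r * (24 * (X 0) ^ 2 - 48 * X 1)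
      + (24 * X 0 * X 1) * s))
    = C 2 * (p * X 2) + (q * X 2 + q * X 0) * X 2
      + C 24 * (r * ((X 0)^2 - 2 * X 1)) + C 24 * (s * (X 0 * X 1)) by
      rw [show (C 2 : MvPolynomial (Fin 3) ℤ) = 2 from by simp,
        show (C 24 : MvPolynomial (Fin 3) ℤ) = 24 from by rw [map_ofNat]]
      ring]
  simp only [coeff_add, coeff_C_mul]
  have e1 : ((Finsupp.single 0 2 : Fin 3 →₀ ℕ) - Finsupp.single 0 1) = Finsupp.single 0 1 := by
    ext i; fin_cases i <;> simp
  have e2 : ((Finsupp.single 0 1 + Finsupp.single 2 2 : Fin 3 →₀ ℕ) - Finsupp.single 2 1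
      - Finsupp.single 2 1) = Finsupp.single 0 1 := by
    ext i; fin_cases i <;> simp
  have e3 : ((Finsupp.single 0 1 + Finsupp.single 2 2 : Fin 3 →₀ ℕ) - Finsupp.single 2 1
      - Finsupp.single 0 1) = Finsupp.single 2 1 := by
    ext i; fin_cases i <;> simp
  have e4 : ((Finsupp.single 2 3 : Fin 3 →₀ ℕ) - Finsupp.single 2 1 - Finsupp.single 2 1)
      = Finsupp.single 2 1 := by
    ext i; fin_cases i <;> simp
  refine ⟨?_, ?_, ?_, ?_⟩ <;>
    simp [coeff_mul_X', Finsupp.mem_support_iff, Finsupp.single_apply, Finsupp.add_apply,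
      Finsupp.tsub_apply, e1, e2, e3, e4] <;> omega

private theorem aux_decomp (f : MvPolynomial (Fin 3) ℤ)
    (hf : f.IsWeightedHomogeneous ![1,2,1] 3) :
    f = C (coeff (Finsupp.single 0 3) f) * X 0 ^ 3
      + C (coeff (Finsupp.single 0 1 + Finsupp.single 1 1) f) * (X 0 * X 1)
      + C (coeff (Finsupp.single 0 2 + Finsupp.single 2 1) f) * (X 0 ^ 2 * X 2)
      + C (coeff (Finsupp.single 1 1 + Finsupp.single 2 1) f) * (X 1 * X 2)
      + C (coeff (Finsupp.single 0 1 + Finsupp.single 2 2) f) * (X 0 * X 2 ^ 2)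
      + C (coeff (Finsupp.single 2 3) f) * X 2 ^ 3 := by
  have hw : ∀ m : Fin 3 →₀ ℕ, (Finsupp.weight ![1,2,1]) m = m 0 + 2 * m 1 + m 2 := by
    intro m
    rw [show m = Finsupp.single 0 (m 0) + Finsupp.single 1 (m 1) + Finsupp.single 2 (m 2) from by
      ext i; fin_cases i <;> simp]
    rw [Finsupp.weight_apply, Finsupp.sum_add_index' (by simp) (by intros; ring),
      Finsupp.sum_add_index' (by simp) (by intros; ring)]
    simp [Finsupp.sum_single_index]
    ring
  ext m
  by_cases h3 : m 0 + 2 * m 1 + m 2 = 3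
  · have hrep : m = Finsupp.single 0 (m 0) + Finsupp.single 1 (m 1) + Finsupp.single 2 (m 2) := by
      ext i; fin_cases i <;> simp
    have hcases : (m 0 = 3 ∧ m 1 = 0 ∧ m 2 = 0) ∨ (m 0 = 1 ∧ m 1 = 1 ∧ m 2 = 0)
        ∨ (m 0 = 2 ∧ m 1 = 0 ∧ m 2 = 1) ∨ (m 0 = 0 ∧ m 1 = 1 ∧ m 2 = 1)
        ∨ (m 0 = 1 ∧ m 1 = 0 ∧ m 2 = 2) ∨ (m 0 = 0 ∧ m 1 = 0 ∧ m 2 = 3) := by omega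
    rcases hcases with ⟨h0,h1,h2⟩|⟨h0,h1,h2⟩|⟨h0,h1,h2⟩|⟨h0,h1,h2⟩|⟨h0,h1,h2⟩|⟨h0,h1,h2⟩ <;>
      rw [h0, h1, h2] at hrep <;>
      rw [show m = _ from hrep] <;>
      simp only [X_pow_eq_monomial, X, monomial_mul, monomial_pow, one_mul, mul_one,
        C_mul_monomial, coeff_add, coeff_monomial] <;>
      simp [fs_eq_iff, Finsupp.single_apply, Finsupp.add_apply]
  · rw [hf.coeff_eq_zero m (by rw [hw m]; exact h3)]
    have hne : ∀ d : Fin 3 →₀ ℕ, d 0 + 2 * d 1 + d 2 = 3 → d ≠ m := by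
      intro d hd he; exact h3 (he ▸ hd)
    simp only [X_pow_eq_monomial, X, monomial_mul, monomial_pow, one_mul, mul_one,
      C_mul_monomial, coeff_add, coeff_monomial]
    rw [if_neg (hne _ (by simp)), if_neg (hne _ (by simp)), if_neg (hne _ (by simp)),
      if_neg (hne _ (by simp)), if_neg (hne _ (by simp)), if_neg (hne _ (by simp))]
    simp

private theorem aux_mem (I : Ideal (MvPolynomial (Fin 3) ℤ))
    (hI : I = Ideal.span {2 * X 2, (X 2) ^ 2 + X 0 * X 2,
      24 * (X 0) ^ 2 - 48 * X 1, 24 * X 0 * X 1})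
    (f : MvPolynomial (Fin 3) ℤ) (hf : f.IsWeightedHomogeneous ![1,2,1] 3)
    (ε₁ ε₂ a b d e : ℤ)
    (ha : coeff (Finsupp.single 0 3) f = 24 * a)
    (hb : coeff (Finsupp.single 0 1 + Finsupp.single 1 1) f = 24 * b)
    (hd : coeff (Finsupp.single 1 1 + Finsupp.single 2 1) f = 2 * d + ε₂)
    (he : coeff (Finsupp.single 0 1 + Finsupp.single 2 2) f
      = 2 * e + (coeff (Finsupp.single 0 2 + Finsupp.single 2 1) f - ε₁)
        + coeff (Finsupp.single 2 3) f) :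
    f - (C ε₁ * (X 0 ^ 2 * X 2) + C ε₂ * (X 1 * X 2)) ∈ I := by
  have hf2 := aux_decomp f hf
  rw [ha, hb, hd, he] at hf2
  simp only [map_mul, map_add, map_sub, map_ofNat] at hf2
  have key : f - (C ε₁ * (X 0 ^ 2 * X 2) + C ε₂ * (X 1 * X 2))
      = (C d * X 1 + C e * (X 0 * X 2)) * (2 * X 2)
      + ((C (coeff (Finsupp.single 0 2 + Finsupp.single 2 1) f) - C ε₁) * X 0
          + C (coeff (Finsupp.single 2 3) f) * X 2) * ((X 2) ^ 2 + X 0 * X 2)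
      + (C a * X 0) * (24 * (X 0) ^ 2 - 48 * X 1)
      + (2 * C a + C b) * (24 * X 0 * X 1) := by
    linear_combination hf2
  rw [key, hI]
  refine add_mem (add_mem (add_mem ?_ ?_) ?_) ?_ <;>
    exact Ideal.mul_mem_left _ _ (Ideal.subset_span (by simp))

theorem stmt14 (I : Ideal (MvPolynomial (Fin 3) ℤ))
    (hI : I = Ideal.span {2 * X 2, (X 2) ^ 2 + X 0 * X 2,
      24 * (X 0) ^ 2 - 48 * X 1, 24 * X 0 * X 1}) :
    (∀ f : MvPolynomial (Fin 3) ℤ, f.IsWeightedHomogeneous ![1, 2, 1] 3 →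
      ((X 2 - X 0) * f ∈ I ↔
        (f ∈ I ∨ f - X 2 * (X 0) ^ 2 ∈ I ∨ f - X 2 * X 1 ∈ I ∨
          f - X 2 * ((X 0) ^ 2 + X 1) ∈ I))) ∧
    (X 2 * (X 0) ^ 2 ∉ I ∧ X 2 * X 1 ∉ I ∧ X 2 * ((X 0) ^ 2 + X 1) ∉ I) ∧
    (X 2 * (X 0) ^ 2 - X 2 * X 1 ∉ I ∧
      X 2 * (X 0) ^ 2 - X 2 * ((X 0) ^ 2 + X 1) ∉ I ∧
      X 2 * X 1 - X 2 * ((X 0) ^ 2 + X 1) ∉ I) := by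
  refine ⟨?_, ⟨?_, ?_, ?_⟩, ⟨?_, ?_, ?_⟩⟩
  · intro f hf
    constructor
    · intro h
      have hdvd := aux_mem_dvd I hI h
      have hA : (24:ℤ) ∣ coeff (Finsupp.single 0 3) f := by
        have h1 := hdvd.1
        rw [show (X 2 - X 0) * f = X 2 * f - X 0 * f by ring, coeff_sub, coeff_X_mul',
          coeff_X_mul'] at h1
        simp only [Finsupp.mem_support_iff, Finsupp.single_apply] at h1
        norm_num at h1
        rwa [if_neg (by decide), zero_sub, dvd_neg,
          show ((Finsupp.single 0 4 : Fin 3 →₀ ℕ) - Finsupp.single 0 1)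
            = Finsupp.single 0 3 from by ext i; fin_cases i <;> simp] at h1
      have hB : (24:ℤ) ∣ coeff (Finsupp.single 0 1 + Finsupp.single 1 1) f := by
        have h1 := hdvd.2.1
        rw [show (X 2 - X 0) * f = X 2 * f - X 0 * f by ring, coeff_sub, coeff_X_mul',
          coeff_X_mul'] at h1
        simp only [Finsupp.mem_support_iff, Finsupp.single_apply, Finsupp.add_apply] at h1
        norm_num at h1
        rwa [if_neg (by decide), zero_sub, dvd_neg,
          show ((Finsupp.single 0 2 + Finsupp.single 1 1 : Fin 3 →₀ ℕ) - Finsupp.single 0 1)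
            = Finsupp.single 0 1 + Finsupp.single 1 1 from by ext i; fin_cases i <;> simp] at h1
      obtain ⟨a, ha⟩ := hA
      obtain ⟨b, hb⟩ := hB
      rcases Int.even_or_odd (coeff (Finsupp.single 1 1 + Finsupp.single 2 1) f) with
        ⟨d, hd⟩ | ⟨d, hd⟩ <;>
      rcases Int.even_or_odd (coeff (Finsupp.single 0 1 + Finsupp.single 2 2) f
          - coeff (Finsupp.single 0 2 + Finsupp.single 2 1) f
          - coeff (Finsupp.single 2 3) f) with ⟨e, hee⟩ | ⟨e, hee⟩
      · left
        have := aux_mem I hI f hf 0 0 a b d e ha hb (by omega) (by omega)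
        simpa using this
      · right; left
        have := aux_mem I hI f hf 1 0 a b d (e+1) ha hb (by omega) (by omega)
        rw [show f - X 2 * (X 0) ^ 2
          = f - (C 1 * (X 0 ^ 2 * X 2) + C 0 * (X 1 * X 2)) from by
            simp only [map_one, map_zero, one_mul, zero_mul, add_zero]; ring]
        exact this
      · right; right; left
        have := aux_mem I hI f hf 0 1 a b d e ha hb (by omega) (by omega)
        rw [show f - X 2 * X 1
          = f - (C 0 * (X 0 ^ 2 * X 2) + C 1 * (X 1 * X 2)) from by
            simp only [map_one, map_zero, one_mul, zero_mul, zero_add]; ring]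
        exact this
      · right; right; right
        have := aux_mem I hI f hf 1 1 a b d (e+1) ha hb (by omega) (by omega)
        rw [show f - X 2 * ((X 0) ^ 2 + X 1)
          = f - (C 1 * (X 0 ^ 2 * X 2) + C 1 * (X 1 * X 2)) from by
            simp only [map_one, one_mul]; ring]
        exact this
    · intro h
      have gen1 : (2 * X 2 : MvPolynomial (Fin 3) ℤ) ∈ I := by
        rw [hI]; exact Ideal.subset_span (by simp)
      have gen2 : ((X 2) ^ 2 + X 0 * X 2 : MvPolynomial (Fin 3) ℤ) ∈ I := by
        rw [hI]; exact Ideal.subset_span (by simp)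
      rcases h with h | h | h | h
      · exact Ideal.mul_mem_left _ _ h
      · rw [show (X 2 - X 0) * f = (X 2 - X 0) * (f - X 2 * (X 0) ^ 2)
            + ((X 0 ^ 2) * ((X 2) ^ 2 + X 0 * X 2) + (- X 0 ^ 3) * (2 * X 2)) by ring]
        exact add_mem (Ideal.mul_mem_left _ _ h)
          (add_mem (Ideal.mul_mem_left _ _ gen2) (Ideal.mul_mem_left _ _ gen1))
      · rw [show (X 2 - X 0) * f = (X 2 - X 0) * (f - X 2 * X 1)
            + ((X 1) * ((X 2) ^ 2 + X 0 * X 2) + (- (X 0 * X 1)) * (2 * X 2)) by ring]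
        exact add_mem (Ideal.mul_mem_left _ _ h)
          (add_mem (Ideal.mul_mem_left _ _ gen2) (Ideal.mul_mem_left _ _ gen1))
      · rw [show (X 2 - X 0) * f = (X 2 - X 0) * (f - X 2 * ((X 0) ^ 2 + X 1))
            + ((X 0 ^ 2 + X 1) * ((X 2) ^ 2 + X 0 * X 2)
              + (- (X 0 ^ 3 + X 0 * X 1)) * (2 * X 2)) by ring]
        exact add_mem (Ideal.mul_mem_left _ _ h)
          (add_mem (Ideal.mul_mem_left _ _ gen2) (Ideal.mul_mem_left _ _ gen1))
  · intro h
    have h1 := (aux_mem_dvd I hI h).2.2.2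
    simp only [X_pow_eq_monomial, X, monomial_mul, monomial_pow, one_mul, mul_one,
      coeff_monomial] at h1
    simp [fs_eq_iff, Finsupp.single_apply, Finsupp.add_apply] at h1
  · intro h
    have h1 := (aux_mem_dvd I hI h).2.2.1
    simp only [X_pow_eq_monomial, X, monomial_mul, monomial_pow, one_mul, mul_one,
      coeff_monomial] at h1
    simp [fs_eq_iff, Finsupp.single_apply, Finsupp.add_apply] at h1
  · intro h
    have h1 := (aux_mem_dvd I hI h).2.2.1
    simp only [mul_add, X_pow_eq_monomial, X, monomial_mul, monomial_pow, one_mul, mul_one,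
      coeff_add, coeff_monomial] at h1
    simp [fs_eq_iff, Finsupp.single_apply, Finsupp.add_apply] at h1
  · intro h
    have h1 := (aux_mem_dvd I hI h).2.2.1
    simp only [X_pow_eq_monomial, X, monomial_mul, monomial_pow, one_mul, mul_one,
      coeff_sub, coeff_monomial] at h1
    simp [fs_eq_iff, Finsupp.single_apply, Finsupp.add_apply] at h1
  · intro h
    have h1 := (aux_mem_dvd I hI h).2.2.1
    simp only [mul_add, sub_add_eq_sub_sub, X_pow_eq_monomial, X, monomial_mul, monomial_pow,
      one_mul, mul_one, coeff_sub, coeff_add, coeff_monomial] at h1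
    simp [fs_eq_iff, Finsupp.single_apply, Finsupp.add_apply] at h1
  · intro h
    have h1 := (aux_mem_dvd I hI h).2.2.2
    simp only [mul_add, sub_add_eq_sub_sub, X_pow_eq_monomial, X, monomial_mul, monomial_pow,
      one_mul, mul_one, coeff_sub, coeff_add, coeff_monomial] at h1
    simp [fs_eq_iff, Finsupp.single_apply, Finsupp.add_apply] at h1
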